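/- Let S ⊆ {0,1}^n be nonempty and let c_1,...,c_n be independent random variables each with density bounded by φ. Define the winner gap Δ = c·x** − c·x*, where x* is the minimizer of c·x over S and x** is the minimizer over S \ {x*}. Then for every ε > 0, Pr[Δ ≤ ε] ≤ 2nφε. -/

import Mathlib

open MeasureTheory
open scoped ProbabilityTheory ENNReal

def dotB {n : ℕ} (c : Fin n → ℝ) (x : Fin n → Bool) : ℝ :=
  ∑ i, c i * (if x i then 1 else 0)

def wgExt {n : ℕ} (i : Fin n) (w : ↥({i}ᶜ : Finset (Fin n)) → ℝ) : Fin n → ℝ :=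
  fun j => if hj : j = i then 0 else w ⟨j, by simp [hj]⟩

lemma wgExt_measurable {n : ℕ} (i : Fin n) : Measurable (wgExt i) := by
  apply measurable_pi_lambda
  intro j
  by_cases hj : j = i
  · simp only [wgExt, dif_pos hj]; exact measurable_const
  · simp only [wgExt, dif_neg hj]; exact measurable_pi_apply _

lemma measurable_dotB {n : ℕ} (x : Fin n → Bool) :
    Measurable fun v : Fin n → ℝ => dotB v x := by
  unfold dotB
  exact Finset.measurable_sum _ fun j _ => (measurable_pi_apply j).mul_const _

lemma dotB_wgExt {n : ℕ} (i : Fin n) (v : Fin n → ℝ) (x : Fin n → Bool) :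
    dotB (wgExt i fun j => v j.1) x = dotB v x - v i * (if x i then 1 else 0) := by
  unfold dotB
  have h1 : ∀ j : Fin n, wgExt i (fun j => v j.1) j * (if x j then 1 else 0)
      = v j * (if x j then 1 else 0) - (if j = i then v i * (if x i then 1 else 0) else 0) := by
    intro j
    by_cases hj : j = i
    · subst hj; simp [wgExt]
    · simp [wgExt, hj]
  calc ∑ j, wgExt i (fun j => v j.1) j * (if x j then 1 else 0)
      = ∑ j, (v j * (if x j then 1 else 0)
          - (if j = i then v i * (if x i then 1 else 0) else 0)) :=
        Finset.sum_congr rfl fun j _ => h1 j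
    _ = _ := by rw [Finset.sum_sub_distrib]; simp

lemma wg_pointwise {n : ℕ} (S : Finset (Fin n → Bool)) (v : Fin n → ℝ) (ε : ℝ)
    (xs xss : Fin n → Bool) (hxs : xs ∈ S) (hxss : xss ∈ S) (hne : xs ≠ xss)
    (hmin : ∀ y ∈ S, dotB v xs ≤ dotB v y)
    (hmin2 : ∀ y ∈ S, y ≠ xs → dotB v xss ≤ dotB v y)
    (hgap : dotB v xss - dotB v xs ≤ ε) :
    ∃ i : Fin n, ∃ (h0 : (S.filter (fun x => x i = false)).Nonempty)
      (h1 : (S.filter (fun x => x i = true)).Nonempty),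
      |v i - ((S.filter (fun x => x i = false)).inf' h0
          (fun x => dotB (wgExt i fun j => v j.1) x)
        - (S.filter (fun x => x i = true)).inf' h1
          (fun x => dotB (wgExt i fun j => v j.1) x))| ≤ ε := by
  classical
  have hΔ0 : 0 ≤ dotB v xss - dotB v xs := sub_nonneg.mpr (hmin xss hxss)
  obtain ⟨i, hi⟩ : ∃ i, xs i ≠ xss i := by
    by_contra h
    push_neg at h
    exact hne (funext h)
  refine ⟨i, ?_⟩
  set F : (Fin n → Bool) → ℝ := fun x => dotB (wgExt i fun j => v j.1) x with hF
  have hFval : ∀ x, F x = dotB v x - v i * (if x i then 1 else 0) :=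
    fun x => dotB_wgExt i v x
  rcases Bool.eq_false_or_eq_true (xs i) with hxi | hxi
  · -- xs i = true, xss i = false
    have hxssi : xss i = false := by
      cases hxb : xss i with
      | false => rfl
      | true => exact absurd (hxi.trans hxb.symm) hi
    have h0 : (S.filter fun x => x i = false).Nonempty :=
      ⟨xss, Finset.mem_filter.mpr ⟨hxss, hxssi⟩⟩
    have h1 : (S.filter fun x => x i = true).Nonempty :=
      ⟨xs, Finset.mem_filter.mpr ⟨hxs, hxi⟩⟩
    refine ⟨h0, h1, ?_⟩
    have hm0 : (S.filter fun x => x i = false).inf' h0 F = dotB v xss := by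
      apply le_antisymm
      · calc (S.filter fun x => x i = false).inf' h0 F
            ≤ F xss := Finset.inf'_le _ (Finset.mem_filter.mpr ⟨hxss, hxssi⟩)
          _ = dotB v xss := by rw [hFval, hxssi]; norm_num
      · obtain ⟨y, hy, hEq⟩ := Finset.exists_mem_eq_inf' h0 F
        rw [hEq]
        obtain ⟨hyS, hyi⟩ := Finset.mem_filter.mp hy
        have hyne : y ≠ xs := by
          intro h; subst h; rw [hxi] at hyi; exact Bool.noConfusion hyi
        have hFy : F y = dotB v y := by rw [hFval, hyi]; norm_num
        rw [hFy]
        exact hmin2 y hyS hyne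
    have hm1 : (S.filter fun x => x i = true).inf' h1 F = dotB v xs - v i := by
      apply le_antisymm
      · calc (S.filter fun x => x i = true).inf' h1 F
            ≤ F xs := Finset.inf'_le _ (Finset.mem_filter.mpr ⟨hxs, hxi⟩)
          _ = dotB v xs - v i := by rw [hFval, hxi]; norm_num
      · obtain ⟨y, hy, hEq⟩ := Finset.exists_mem_eq_inf' h1 F
        rw [hEq]
        obtain ⟨hyS, hyi⟩ := Finset.mem_filter.mp hy
        have hFy : F y = dotB v y - v i := by rw [hFval, hyi]; norm_num
        rw [hFy]
        have := hmin y hyS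
        linarith
    rw [hm0, hm1]
    have heq : v i - (dotB v xss - (dotB v xs - v i)) = -(dotB v xss - dotB v xs) := by ring
    rw [heq, abs_le]
    constructor <;> linarith
  · -- xs i = false, xss i = true
    have hxssi : xss i = true := by
      cases hxb : xss i with
      | true => rfl
      | false => exact absurd (hxi.trans hxb.symm) hi
    have h0 : (S.filter fun x => x i = false).Nonempty :=
      ⟨xs, Finset.mem_filter.mpr ⟨hxs, hxi⟩⟩
    have h1 : (S.filter fun x => x i = true).Nonempty :=
      ⟨xss, Finset.mem_filter.mpr ⟨hxss, hxssi⟩⟩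
    refine ⟨h0, h1, ?_⟩
    have hm0 : (S.filter fun x => x i = false).inf' h0 F = dotB v xs := by
      apply le_antisymm
      · calc (S.filter fun x => x i = false).inf' h0 F
            ≤ F xs := Finset.inf'_le _ (Finset.mem_filter.mpr ⟨hxs, hxi⟩)
          _ = dotB v xs := by rw [hFval, hxi]; norm_num
      · obtain ⟨y, hy, hEq⟩ := Finset.exists_mem_eq_inf' h0 F
        rw [hEq]
        obtain ⟨hyS, hyi⟩ := Finset.mem_filter.mp hy
        have hFy : F y = dotB v y := by rw [hFval, hyi]; norm_num
        rw [hFy]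
        exact hmin y hyS
    have hm1 : (S.filter fun x => x i = true).inf' h1 F = dotB v xss - v i := by
      apply le_antisymm
      · calc (S.filter fun x => x i = true).inf' h1 F
            ≤ F xss := Finset.inf'_le _ (Finset.mem_filter.mpr ⟨hxss, hxssi⟩)
          _ = dotB v xss - v i := by rw [hFval, hxssi]; norm_num
      · obtain ⟨y, hy, hEq⟩ := Finset.exists_mem_eq_inf' h1 F
        rw [hEq]
        obtain ⟨hyS, hyi⟩ := Finset.mem_filter.mp hy
        have hyne : y ≠ xs := by
          intro h; subst h; rw [hxi] at hyi; exact Bool.noConfusion hyi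
        have hFy : F y = dotB v y - v i := by rw [hFval, hyi]; norm_num
        rw [hFy]
        have := hmin2 y hyS hyne
        linarith
    rw [hm0, hm1]
    have heq : v i - (dotB v xs - (dotB v xss - v i)) = dotB v xss - dotB v xs := by ring
    rw [heq, abs_le]
    exact ⟨by linarith, hgap⟩

lemma wg_measurable_inf' {α ι : Type*} [MeasurableSpace α] {s : Finset ι} (hs : s.Nonempty)
    {f : ι → α → ℝ} (hf : ∀ i, Measurable (f i)) :
    Measurable (fun a => s.inf' hs (fun i => f i a)) := by
  induction hs using Finset.Nonempty.cons_induction with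
  | singleton i => simpa only [Finset.inf'_singleton] using hf i
  | cons i s his hs ih =>
      simp only [Finset.inf'_cons (H := hs)]
      exact (hf i).inf ih

lemma wg_iIndepFun_ae {Ω : Type*} [MeasureSpace Ω] {n : ℕ} {f g : Fin n → Ω → ℝ}
    (h : ProbabilityTheory.iIndepFun f ℙ)
    (hfg : ∀ i, f i =ᵐ[ℙ] g i) :
    ProbabilityTheory.iIndepFun g ℙ := by
  rw [ProbabilityTheory.iIndepFun_iff_measure_inter_preimage_eq_mul] at h ⊢
  have hall : ∀ᵐ ω ∂ℙ, ∀ i, f i ω = g i ω := ae_all_iff.mpr hfg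
  intro S sets hsets
  have h1 : ∀ i, ℙ (f i ⁻¹' sets i) = ℙ (g i ⁻¹' sets i) := fun i =>
    measure_congr ((hfg i).mono fun ω hω => by
      show (f i ω ∈ sets i) = (g i ω ∈ sets i); rw [hω])
  have h2 : ℙ (⋂ i ∈ S, f i ⁻¹' sets i) = ℙ (⋂ i ∈ S, g i ⁻¹' sets i) :=
    measure_congr (hall.mono fun ω hω => by
      show (ω ∈ ⋂ i ∈ S, f i ⁻¹' sets i) = (ω ∈ ⋂ i ∈ S, g i ⁻¹' sets i)
      simp only [Set.mem_iInter, Set.mem_preimage]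
      exact propext (forall₂_congr fun i _ => by rw [hω i]))
  rw [← h2, h S hsets]
  exact Finset.prod_congr rfl fun i _ => h1 i

lemma wg_key_bound {Ω α : Type*} [MeasureSpace Ω] [IsProbabilityMeasure (ℙ : Measure Ω)]
    [MeasurableSpace α] {X : Ω → ℝ} {Y : Ω → α} (hX : Measurable X) (hY : Measurable Y)
    (hindep : ProbabilityTheory.IndepFun X Y ℙ)
    {f : ℝ → ℝ≥0∞} (hmap : (Measure.map X ℙ) = (volume : Measure ℝ).withDensity f)
    {φ : ℝ} (hφ : 0 ≤ φ) (hf : ∀ᵐ x : ℝ, f x ≤ ENNReal.ofReal φ)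
    {h : α → ℝ} (hh : Measurable h) {ε : ℝ} (hε : 0 ≤ ε) :
    ℙ {ω | |X ω - h (Y ω)| ≤ ε} ≤ ENNReal.ofReal (2 * φ * ε) := by
  have hμX : IsProbabilityMeasure ((Measure.map X ℙ)) := Measure.isProbabilityMeasure_map hX.aemeasurable
  have hμY : IsProbabilityMeasure ((Measure.map Y ℙ)) := Measure.isProbabilityMeasure_map hY.aemeasurable
  set B : Set (α × ℝ) := {p | |p.2 - h p.1| ≤ ε} with hB
  have hBm : MeasurableSet B :=
    measurableSet_le ((measurable_snd.sub (hh.comp measurable_fst)).abs) measurable_const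
  have hpair : Measurable fun ω => (Y ω, X ω) := hY.prodMk hX
  have hset : {ω | |X ω - h (Y ω)| ≤ ε} = (fun ω => (Y ω, X ω)) ⁻¹' B := rfl
  rw [hset, ← Measure.map_apply hpair hBm,
      (ProbabilityTheory.indepFun_iff_map_prod_eq_prod_map_map hY.aemeasurable
        hX.aemeasurable).mp hindep.symm,
      Measure.prod_apply hBm]
  have hslice : ∀ y : α, ((Measure.map X ℙ)) (Prod.mk y ⁻¹' B) ≤ ENNReal.ofReal (2 * φ * ε) := by
    intro y
    have hIcc : Prod.mk y ⁻¹' B = Set.Icc (h y - ε) (h y + ε) := by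
      ext x
      simp only [Set.mem_preimage, hB, Set.mem_setOf_eq, Set.mem_Icc, abs_le]
      constructor <;> rintro ⟨a, b⟩ <;> constructor <;> linarith
    rw [hIcc, hmap, withDensity_apply _ measurableSet_Icc]
    calc ∫⁻ x in Set.Icc (h y - ε) (h y + ε), f x
        ≤ ∫⁻ _ in Set.Icc (h y - ε) (h y + ε), ENNReal.ofReal φ :=
          lintegral_mono_ae (ae_restrict_of_ae hf)
      _ = ENNReal.ofReal φ * volume (Set.Icc (h y - ε) (h y + ε)) := by
          rw [setLIntegral_const]
      _ = ENNReal.ofReal φ * ENNReal.ofReal (2 * ε) := by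
          rw [Real.volume_Icc]; congr 1; ring
      _ = ENNReal.ofReal (2 * φ * ε) := by
          rw [← ENNReal.ofReal_mul hφ]; ring_nf
  calc ∫⁻ y, ((Measure.map X ℙ)) (Prod.mk y ⁻¹' B) ∂((Measure.map Y ℙ))
      ≤ ∫⁻ _, ENNReal.ofReal (2 * φ * ε) ∂((Measure.map Y ℙ)) := lintegral_mono hslice
    _ = ENNReal.ofReal (2 * φ * ε) := by simp


/-- Winner-gap lemma: for `S ⊆ {0,1}^n` with at least two solutions and independent
`φ`-perturbed coefficients, the probability that the gap between the best and the
second-best solution is at most `ε` is at most `2nφε`. -/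
theorem winner_gap {Ω : Type*} [MeasureSpace Ω]
    [IsProbabilityMeasure (ℙ : Measure Ω)] {n : ℕ}
    (S : Finset (Fin n → Bool)) (hS : 2 ≤ S.card)
    (c : Fin n → Ω → ℝ) (φ : ℝ) (hφ : 0 < φ)
    (hindep : ProbabilityTheory.iIndepFun c ℙ)
    (hpdf : ∀ i, HasPDF (c i) ℙ)
    (hbound : ∀ i, ∀ᵐ x : ℝ, pdf (c i) ℙ volume x ≤ ENNReal.ofReal φ)
    (ε : ℝ) (hε : 0 < ε) :
    ℙ {ω | ∃ xs ∈ S, ∃ xss ∈ S, xs ≠ xss ∧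
        (∀ y ∈ S, dotB (fun i => c i ω) xs ≤ dotB (fun i => c i ω) y) ∧
        (∀ y ∈ S, y ≠ xs → dotB (fun i => c i ω) xss ≤ dotB (fun i => c i ω) y) ∧
        dotB (fun i => c i ω) xss - dotB (fun i => c i ω) xs ≤ ε}
      ≤ ENNReal.ofReal (2 * n * φ * ε) := by
  classical
  have hφ0 : (0:ℝ) ≤ φ := hφ.le
  have hXae : ∀ i, AEMeasurable (c i) ℙ := fun i => HasPDF.aemeasurable (c i) ℙ volume
  set g : Fin n → Ω → ℝ := fun i => (hXae i).mk (c i) with hgdef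
  have hgm : ∀ i, Measurable (g i) := fun i => (hXae i).measurable_mk
  have hcg : ∀ i, c i =ᵐ[ℙ] g i := fun i => (hXae i).ae_eq_mk
  have hgindep : ProbabilityTheory.iIndepFun g ℙ :=
    wg_iIndepFun_ae hindep hcg
  have hgmap : ∀ i, Measure.map (g i) ℙ
      = (volume : Measure ℝ).withDensity (pdf (c i) ℙ volume) := by
    intro i
    rw [← Measure.map_congr (hcg i)]
    exact map_eq_withDensity_pdf (c i) ℙ volume
  have hXY : ∀ i : Fin n, ProbabilityTheory.IndepFun (g i)
      (fun ω (j : ↥({i}ᶜ : Finset (Fin n))) => g j ω) ℙ := by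
    intro i
    have h1 := hgindep.indepFun_finset {i} ({i}ᶜ) disjoint_compl_right hgm
    exact h1.comp (φ := fun w : ↥({i} : Finset (Fin n)) → ℝ => w ⟨i, Finset.mem_singleton_self i⟩)
      (measurable_pi_apply _) measurable_id
  set E : Fin n → Set Ω := fun i =>
    if hne : (S.filter fun x => x i = false).Nonempty
        ∧ (S.filter fun x => x i = true).Nonempty then
      {ω | |g i ω - ((fun w => (S.filter fun x => x i = false).inf' hne.1
            (fun x => dotB (wgExt i w) x)
          - (S.filter fun x => x i = true).inf' hne.2
            (fun x => dotB (wgExt i w) x))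
          (fun j : ↥({i}ᶜ : Finset (Fin n)) => g j ω))| ≤ ε}
    else ∅ with hEdef
  have hEbound : ∀ i, ℙ (E i) ≤ ENNReal.ofReal (2 * φ * ε) := by
    intro i
    by_cases hne : (S.filter fun x => x i = false).Nonempty
        ∧ (S.filter fun x => x i = true).Nonempty
    · have : E i = {ω | |g i ω - ((fun w => (S.filter fun x => x i = false).inf' hne.1
            (fun x => dotB (wgExt i w) x)
          - (S.filter fun x => x i = true).inf' hne.2
            (fun x => dotB (wgExt i w) x))
          (fun j : ↥({i}ᶜ : Finset (Fin n)) => g j ω))| ≤ ε} := by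
        rw [hEdef]; exact dif_pos hne
      rw [this]
      exact wg_key_bound (α := ↥({i}ᶜ : Finset (Fin n)) → ℝ) (X := g i)
        (Y := fun ω (j : ↥({i}ᶜ : Finset (Fin n))) => g j ω)
        (h := fun w => (S.filter fun x => x i = false).inf' hne.1
            (fun x => dotB (wgExt i w) x)
          - (S.filter fun x => x i = true).inf' hne.2
            (fun x => dotB (wgExt i w) x))
        (hgm i) (measurable_pi_lambda _ fun j => hgm j) (hXY i) (hgmap i)
        hφ0 (hbound i)
        ((wg_measurable_inf' hne.1 fun x => (measurable_dotB x).comp (wgExt_measurable i)).sub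
         (wg_measurable_inf' hne.2 fun x => (measurable_dotB x).comp (wgExt_measurable i)))
        hε.le
    · have : E i = ∅ := by rw [hEdef]; exact dif_neg hne
      simp [this]
  have hae : ∀ᵐ ω ∂ℙ, (fun i => c i ω) = (fun i => g i ω) :=
    (ae_all_iff.mpr hcg).mono fun ω h => funext h
  refine le_trans (measure_mono_ae (s := _) (t := ⋃ i, E i) ?_) ?_
  · filter_upwards [hae] with ω h hω
    obtain ⟨xs, hxs, xss, hxss, hne, hmin, hmin2, hgap⟩ := hω
    rw [h] at hmin hmin2 hgap
    obtain ⟨i, h0, h1, habs⟩ :=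
      wg_pointwise S (fun j => g j ω) ε xs xss hxs hxss hne hmin hmin2 hgap
    refine Set.mem_iUnion.mpr ⟨i, ?_⟩
    have hEi : E i = {ω | |g i ω - ((fun w => (S.filter fun x => x i = false).inf' h0
            (fun x => dotB (wgExt i w) x)
          - (S.filter fun x => x i = true).inf' h1
            (fun x => dotB (wgExt i w) x))
          (fun j : ↥({i}ᶜ : Finset (Fin n)) => g j ω))| ≤ ε} := by
      rw [hEdef]; exact dif_pos ⟨h0, h1⟩
    rw [hEi]
    exact habs
  · calc ℙ (⋃ i, E i)
        ≤ ∑' i, ℙ (E i) := measure_iUnion_le E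
      _ = ∑ i, ℙ (E i) := tsum_fintype _
      _ ≤ ∑ _i : Fin n, ENNReal.ofReal (2 * φ * ε) :=
          Finset.sum_le_sum fun i _ => hEbound i
      _ = (n : ℝ≥0∞) * ENNReal.ofReal (2 * φ * ε) := by
          simp [Finset.sum_const, nsmul_eq_mul]
      _ = ENNReal.ofReal (2 * ↑n * φ * ε) := by
          rw [← ENNReal.ofReal_natCast n, ← ENNReal.ofReal_mul (by positivity)]
          congr 1
          ring
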